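/- arXiv:1009.0873 — 5 statements merged into one kernel-verified Lean document; each statement's English description precedes it below -/
import Mathlib

section
/- A 2×2 complex matrix C satisfies C² = I and diag(1,-1)·C > 0 (positive definite) if and only if there exist χ ∈ ℝ and ω ∈ [0,2π) such that C = [[cosh χ, (sinh χ)e^{-iω}], [-(sinh χ)e^{iω}, -cosh χ]]. -/
open Complex Matrix
open scoped ComplexOrder

private lemma expI (ω : ℝ) : Complex.exp (Complex.I * ω) = (Real.cos ω : ℂ) + (Real.sin ω : ℂ) * Complex.I := by
  rw [mul_comm, Complex.exp_mul_I]; norm_cast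

lemma expnegI (ω : ℝ) : Complex.exp (-(Complex.I * ω)) = (Real.cos ω : ℂ) - (Real.sin ω : ℂ) * Complex.I := by
  have : -(Complex.I * (ω:ℂ)) = Complex.I * ((-ω : ℝ) : ℂ) := by push_cast; ring
  rw [this, expI]; push_cast [Real.cos_neg, Real.sin_neg]; ring

lemma quadpos (c s P Q T : ℝ) (hc : 0 < c) (hs : s^2 < c^2)
    (hN : 0 < P + Q) (hT : T^2 ≤ P * Q) : 0 < c * (P + Q) + 2 * s * T := by
  have hA : 0 < c * (P + Q) := mul_pos hc hN
  have h1 : s^2 * T^2 ≤ s^2 * (P*Q) := by nlinarith [sq_nonneg s]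
  have h2 : 4 * (P*Q) ≤ (P+Q)^2 := by nlinarith [sq_nonneg (P - Q)]
  have h3 : s^2 * (P+Q)^2 < c^2 * (P+Q)^2 := by nlinarith [mul_pos hN hN]
  have hlt : (2*s*T)^2 < (c*(P+Q))^2 := by nlinarith
  nlinarith [hlt, hA]


/-- A 2×2 complex matrix `C` satisfies `C² = I` and `diag(1,-1)·C > 0`
(positive definite) iff `C = [[cosh χ, sinh χ e^{-iω}], [-sinh χ e^{iω}, -cosh χ]]`
for some `χ ∈ ℝ`, `ω ∈ [0, 2π)`. -/
theorem stmt0 (C : Matrix (Fin 2) (Fin 2) ℂ) :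
    (C * C = 1 ∧ (Matrix.diagonal ![1, -1] * C).PosDef) ↔
      ∃ (χ ω : ℝ), 0 ≤ ω ∧ ω < 2 * Real.pi ∧
        C = !![(Real.cosh χ : ℂ), (Real.sinh χ : ℂ) * Complex.exp (-(Complex.I * ω));
               -((Real.sinh χ : ℂ) * Complex.exp (Complex.I * ω)), -(Real.cosh χ : ℂ)] := by
  constructor
  · rintro ⟨hC2, hP⟩
    set a := C 0 0 with ha0
    set b := C 0 1 with hb0
    set c := C 1 0 with hc0
    set d := C 1 1 with hd0
    have hDC : Matrix.diagonal ![(1:ℂ), -1] * C = !![a, b; -c, -d] := by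
      ext i j
      fin_cases i <;> fin_cases j <;>
        simp [Matrix.mul_apply, Fin.sum_univ_two, Matrix.diagonal, ha0, hb0, hc0, hd0]
    rw [hDC] at hP
    -- hermitian facts
    have hHa : (starRingEnd ℂ) a = a := by
      have := congrFun (congrFun hP.1 0) 0
      simpa [Matrix.conjTranspose_apply] using this
    have hHc : c = -(starRingEnd ℂ) b := by
      have := congrFun (congrFun hP.1 0) 1
      simp [Matrix.conjTranspose_apply] at this
      have h2 : (starRingEnd ℂ) c = -b := by
        rw [← neg_eq_iff_eq_neg]; exact this
      calc c = (starRingEnd ℂ) ((starRingEnd ℂ) c) := by simp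
      _ = -(starRingEnd ℂ) b := by rw [h2]; simp
    -- positivity of a
    have hapos : 0 < a := by
      have hne : (![1, 0] : Fin 2 → ℂ) ≠ 0 := by
        intro h
        have := congrFun h 0
        simp at this
      have := hP.dotProduct_mulVec_pos hne
      simpa [dotProduct, Matrix.mulVec, Fin.sum_univ_two] using this
    have hare : 0 < a.re := by
      have := Complex.lt_def.mp hapos
      simpa using this.1
    -- determinant
    have hdet : 0 < -(a * d) + b * c := by
      have := hP.det_pos
      have hd2 : (!![a, b; -c, -d]).det = -(a*d) + b*c := by
        rw [Matrix.det_fin_two_of]; ring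
      rwa [hd2] at this
    -- C^2 = 1 entries
    have e00 : a * a + b * c = 1 := by
      have := congrFun (congrFun hC2 0) 0
      simpa [Matrix.mul_apply, Fin.sum_univ_two, Matrix.one_apply, ha0, hb0, hc0, hd0] using this
    have e01 : a * b + b * d = 0 := by
      have := congrFun (congrFun hC2 0) 1
      simpa [Matrix.mul_apply, Fin.sum_univ_two, Matrix.one_apply, ha0, hb0, hc0, hd0] using this
    have e10 : c * a + d * c = 0 := by
      have := congrFun (congrFun hC2 1) 0
      simpa [Matrix.mul_apply, Fin.sum_univ_two, Matrix.one_apply, ha0, hb0, hc0, hd0] using this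
    have e11 : c * b + d * d = 1 := by
      have := congrFun (congrFun hC2 1) 1
      simpa [Matrix.mul_apply, Fin.sum_univ_two, Matrix.one_apply, ha0, hb0, hc0, hd0] using this
    -- d = -a
    have hda : d = -a := by
      by_contra hne
      have hsum : a + d ≠ 0 := fun h => hne (by linear_combination h)
      have hb0' : b = 0 := by
        rcases mul_eq_zero.mp (show b * (a + d) = 0 by linear_combination e01) with h | h
        · exact h
        · exact absurd h hsum
      have hc0' : c = 0 := by
        rcases mul_eq_zero.mp (show c * (a + d) = 0 by linear_combination e10) with h | h
        · exact h
        · exact absurd h hsum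
      have ha1 : a = 1 := by
        have h1 : (a - 1) * (a + 1) = 0 := by
          rw [hb0', hc0'] at e00; linear_combination e00
        rcases mul_eq_zero.mp h1 with h | h
        · linear_combination h
        · exfalso
          have : a = -1 := by linear_combination h
          rw [this] at hare
          norm_num at hare
      have hd1 : d = 1 ∨ d = -1 := by
        have h1 : (d - 1) * (d + 1) = 0 := by
          rw [hb0', hc0'] at e11; linear_combination e11
        rcases mul_eq_zero.mp h1 with h | h
        · exact Or.inl (by linear_combination h)
        · exact Or.inr (by linear_combination h)
      rcases hd1 with h | h
      · rw [ha1, h, hb0', hc0'] at hdet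
        have := (Complex.lt_def.mp hdet).1
        norm_num at this
      · exact hsum (by rw [ha1, h]; ring)
    -- real structure
    have haim : a.im = 0 := by
      have := Complex.lt_def.mp hapos
      simpa using this.2.symm
    set α := a.re with hα
    have haα : a = (α : ℂ) := by
      exact ((Complex.conj_eq_iff_re).mp hHa).symm
    set β := ‖b‖ with hβ
    have hαβ : α ^ 2 = 1 + β ^ 2 := by
      have h1 : a * a - b * (starRingEnd ℂ) b = 1 := by
        rw [hHc] at e00
        linear_combination e00
      have h2 : b * (starRingEnd ℂ) b = (Complex.normSq b : ℂ) := by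
        rw [Complex.mul_conj]
      rw [haα, h2] at h1
      have h3 : (α:ℂ)^2 - (Complex.normSq b : ℂ) = 1 := by linear_combination h1
      have h4 : α^2 - Complex.normSq b = 1 := by exact_mod_cast h3
      have h5 : Complex.normSq b = β^2 := (Complex.sq_norm b).symm
      linarith [h4, h5.symm.le, h5.le]
    have hαpos : 0 < α := hare
    set χ := Real.arsinh β with hχ
    have hsinh : Real.sinh χ = β := Real.sinh_arsinh β
    have hcosh : Real.cosh χ = α := by
      rw [hχ, Real.cosh_arsinh]
      rw [show 1 + β^2 = α^2 by linarith]
      exact Real.sqrt_sq hαpos.le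
    -- omega
    set θ := Complex.arg b with hθ
    set ω := if 0 < θ then 2 * Real.pi - θ else -θ with hω
    have hθle : θ ≤ Real.pi := Complex.arg_le_pi b
    have hθgt : -Real.pi < θ := Complex.neg_pi_lt_arg b
    have hπ := Real.pi_pos
    have hω0 : 0 ≤ ω := by
      rw [hω]; split_ifs with h
      · linarith
      · linarith [not_lt.mp h]
    have hω2 : ω < 2 * Real.pi := by
      rw [hω]; split_ifs with h
      · linarith
      · linarith
    have hexp : Complex.exp (-(Complex.I * ω)) = Complex.exp (θ * Complex.I) := by
      rw [hω]; split_ifs with h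
      · have harg : -(Complex.I * ((2 * Real.pi - θ : ℝ) : ℂ)) =
            (θ:ℂ) * Complex.I + -(2 * (Real.pi:ℂ) * Complex.I) := by push_cast; ring
        rw [harg, Complex.exp_add, Complex.exp_neg, Complex.exp_two_pi_mul_I]
        simp
      · congr 1
        push_cast
        ring
    have hbval : b = (β : ℂ) * Complex.exp (-(Complex.I * ω)) := by
      rw [hexp, hθ, hβ]
      exact (Complex.norm_mul_exp_arg_mul_I b).symm
    have hcval : c = -((β : ℂ) * Complex.exp (Complex.I * ω)) := by
      rw [hHc, hbval]
      congr 1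
      rw [_root_.map_mul]
      congr 1
      · simp
      · rw [← Complex.exp_conj]
        congr 1
        simp
    refine ⟨χ, ω, hω0, hω2, ?_⟩
    rw [Matrix.eta_fin_two C, ← ha0, ← hb0, ← hc0, ← hd0, hcosh, hsinh, hda, haα, hbval, hcval]
  · rintro ⟨χ, ω, -, -, rfl⟩
    have hid : Real.cos ω ^ 2 + Real.sin ω ^ 2 = 1 := by
      rw [add_comm]; exact Real.sin_sq_add_cos_sq ω
    have hch : Real.sinh χ ^ 2 < Real.cosh χ ^ 2 := by
      nlinarith [Real.cosh_sq_sub_sinh_sq χ]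
    constructor
    · have h1 : Complex.exp (-(Complex.I * ω)) * Complex.exp (Complex.I * ω) = 1 := by
        rw [← Complex.exp_add]; simp
      have h2 : Complex.cosh χ ^ 2 - Complex.sinh χ ^ 2 = 1 := Complex.cosh_sq_sub_sinh_sq χ
      ext i j
      fin_cases i <;> fin_cases j <;>
        simp [Matrix.mul_apply, Fin.sum_univ_two, Matrix.one_apply]
      · linear_combination h2 - Complex.sinh (χ:ℂ) ^ 2 * h1
      · ring
      · ring
      · linear_combination h2 - Complex.sinh (χ:ℂ) ^ 2 * h1
    · have hDC : Matrix.diagonal ![1, -1] *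
          !![(Real.cosh χ : ℂ), (Real.sinh χ : ℂ) * Complex.exp (-(Complex.I * ω));
             -((Real.sinh χ : ℂ) * Complex.exp (Complex.I * ω)), -(Real.cosh χ : ℂ)] =
          !![(Real.cosh χ : ℂ), (Real.sinh χ : ℂ) * Complex.exp (-(Complex.I * ω));
             (Real.sinh χ : ℂ) * Complex.exp (Complex.I * ω), (Real.cosh χ : ℂ)] := by
        ext i j
        fin_cases i <;> fin_cases j <;>
          simp [Matrix.mul_apply, Fin.sum_univ_two, Matrix.diagonal]
      rw [hDC]
      apply Matrix.PosDef.of_dotProduct_mulVec_pos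
      · ext i j
        fin_cases i <;> fin_cases j <;>
          simp [Matrix.conjTranspose_apply, expI, expnegI, Complex.ext_iff]
      · intro x hx
        have hx' : x 0 ≠ 0 ∨ x 1 ≠ 0 := by
          by_contra h
          push_neg at h
          exact hx (funext fun i => by fin_cases i <;> simp [h.1, h.2])
        set a := (x 0).re with ha; set b := (x 0).im with hb
        set u := (x 1).re with hu; set v := (x 1).im with hv
        have hN : 0 < (a^2 + b^2) + (u^2 + v^2) := by
          rcases hx' with h | h
          · have h0 : 0 < a^2 + b^2 := by
              have := Complex.normSq_pos.mpr h
              simpa [Complex.normSq_apply, sq] using this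
            nlinarith [sq_nonneg u, sq_nonneg v]
          · have h0 : 0 < u^2 + v^2 := by
              have := Complex.normSq_pos.mpr h
              simpa [Complex.normSq_apply, sq] using this
            nlinarith [sq_nonneg a, sq_nonneg b]
        set c := Real.cosh χ with hcdef
        set s := Real.sinh χ with hsdef
        set co := Real.cos ω with hcodef
        set si := Real.sin ω with hsidef
        have hred : dotProduct (star x)
            (!![(c : ℂ), (s : ℂ) * Complex.exp (-(Complex.I * ω));
                (s : ℂ) * Complex.exp (Complex.I * ω), (c : ℂ)] *ᵥ x)
            = (starRingEnd ℂ) (x 0) * ((c:ℂ) * x 0 + ((s:ℂ)*((co:ℂ) - (si:ℂ)*Complex.I)) * x 1)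
              + (starRingEnd ℂ) (x 1) * (((s:ℂ)*((co:ℂ) + (si:ℂ)*Complex.I)) * x 0 + (c:ℂ) * x 1) := by
          simp [dotProduct, Matrix.mulVec, Fin.sum_univ_two, expI, expnegI]
          rw [hcodef, hsidef]
          push_cast
          ring
        rw [Complex.lt_def, hred]
        have hT : (co*(a*u+b*v)+si*(a*v-b*u))^2 ≤ (a^2+b^2) * (u^2+v^2) := by
          nlinarith [sq_nonneg (co*(a*v-b*u) - si*(a*u+b*v)), hid]
        have hpos := quadpos c s (a^2+b^2) (u^2+v^2) (co*(a*u+b*v)+si*(a*v-b*u))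
          (Real.cosh_pos χ) hch hN hT
        constructor
        · simp only [Complex.add_re, Complex.mul_re, Complex.mul_im, Complex.add_im,
            Complex.sub_re, Complex.sub_im, Complex.ofReal_re, Complex.ofReal_im,
            Complex.I_re, Complex.I_im, Complex.conj_re, Complex.conj_im, Complex.zero_re,
            ← ha, ← hb, ← hu, ← hv]
          nlinarith [hpos]
        · simp only [Complex.add_re, Complex.mul_re, Complex.mul_im, Complex.add_im,
            Complex.sub_re, Complex.sub_im, Complex.ofReal_re, Complex.ofReal_im,
            Complex.I_re, Complex.I_im, Complex.conj_re, Complex.conj_im, Complex.zero_im,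
            ← ha, ← hb, ← hu, ← hv]
          ring
end

section
/- Let L be a closed symmetric operator on a complex Hilbert space K with empty resolvent set. Define on H = K ⊕ K the operator A = L ⊕ L* and J(x,y) = (y,x). Then J is a self-adjoint involution, A is J-self-adjoint (i.e., JAJ = A*), and the resolvent set of A is empty. -/
open scoped InnerProductSpace LinearPMap

/-- The resolvent set of a (possibly unbounded) operator `A`: points `μ` for which
`A - μ` has a bounded everywhere-defined inverse. -/
def ResolventSet {H : Type*} [NormedAddCommGroup H] [InnerProductSpace ℂ H]
    (A : H →ₗ.[ℂ] H) : Set ℂ :=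
  {μ | ∃ B : H →L[ℂ] H, ∃ hB : ∀ x : H, B x ∈ A.domain,
    (∀ x : H, A ⟨B x, hB x⟩ - μ • B x = x) ∧
    (∀ x : A.domain, B ((A x : H) - μ • (x : H)) = (x : H))}

section Aux

open LinearPMap

variable {K : Type*} [NormedAddCommGroup K] [InnerProductSpace ℂ K] [CompleteSpace K]

lemma pair_inner_aux (a b : K) (q : WithLp 2 (K × K)) :
    ⟪(WithLp.equiv 2 (K × K)).symm (a, b), q⟫_ℂ
      = ⟪a, (WithLp.equiv 2 (K × K) q).1⟫_ℂ + ⟪b, (WithLp.equiv 2 (K × K) q).2⟫_ℂ := rfl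

lemma inner_pair_aux (p : WithLp 2 (K × K)) (a b : K) :
    ⟪p, (WithLp.equiv 2 (K × K)).symm (a, b)⟫_ℂ
      = ⟪(WithLp.equiv 2 (K × K) p).1, a⟫_ℂ + ⟪(WithLp.equiv 2 (K × K) p).2, b⟫_ℂ := rfl

lemma pair_eq_iff_aux (q : WithLp 2 (K × K)) (a b : K) :
    q = (WithLp.equiv 2 (K × K)).symm (a, b) ↔
      (WithLp.equiv 2 (K × K) q).1 = a ∧ (WithLp.equiv 2 (K × K) q).2 = b := by
  rw [Equiv.eq_symm_apply, Prod.ext_iff]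

/-- If `(u, w)` is "adjoint-related" to `L†`, then `(u, w)` lies in the graph of `L`
(this is `L†† = L` for closed densely defined `L`). -/
lemma aux_closed_graph_adjoint (L : K →ₗ.[ℂ] K) (hdense : Dense (L.domain : Set K))
    (hclosed : IsClosed (L.graph : Set (K × K)))
    (u w : K) (h : ∀ y : (L†).domain, ⟪w, (y : K)⟫_ℂ = ⟪u, L† y⟫_ℂ) :
    (u, w) ∈ L.graph := by
  set e := WithLp.linearEquiv 2 ℂ (K × K) with he
  set Gm : Submodule ℂ (WithLp 2 (K × K)) := L.graph.comap (e : WithLp 2 (K × K) →ₗ[ℂ] K × K)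
    with hGm
  have hmemGm : ∀ q : WithLp 2 (K × K),
      q ∈ Gm ↔ (WithLp.equiv 2 (K × K) q) ∈ L.graph := fun q => Iff.rfl
  have hGmc : IsClosed (Gm : Set (WithLp 2 (K × K))) := by
    have : (Gm : Set (WithLp 2 (K × K))) =
        (WithLp.prodContinuousLinearEquiv 2 ℂ K K) ⁻¹' (L.graph : Set (K × K)) := rfl
    rw [this]
    exact hclosed.preimage (WithLp.prodContinuousLinearEquiv 2 ℂ K K).continuous
  haveI : CompleteSpace Gm := hGmc.completeSpace_coe
  have hmem : (WithLp.equiv 2 (K × K)).symm (u, w) ∈ Gmᗮᗮ := by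
    rw [Submodule.mem_orthogonal]
    intro r hr
    rw [Submodule.mem_orthogonal] at hr
    set a := (WithLp.equiv 2 (K × K) r).1 with ha
    set b := (WithLp.equiv 2 (K × K) r).2 with hb
    have hrg : ∀ x : L.domain, ⟪(x : K), a⟫_ℂ + ⟪(L x : K), b⟫_ℂ = 0 := by
      intro x
      have hg : (WithLp.equiv 2 (K × K)).symm ((x : K), (L x : K)) ∈ Gm := by
        rw [hmemGm, Equiv.apply_symm_apply]
        exact L.mem_graph x
      have := hr _ hg
      rwa [show ⟪(WithLp.equiv 2 (K × K)).symm ((x : K), (L x : K)), r⟫_ℂ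
          = ⟪(x : K), a⟫_ℂ + ⟪(L x : K), b⟫_ℂ from rfl] at this
    have hb' : b ∈ (L†).domain := by
      apply mem_adjoint_domain_of_exists
      refine ⟨-a, fun x => ?_⟩
      have := congrArg (starRingEnd ℂ) (hrg x)
      simp only [_root_.map_add, inner_conj_symm, _root_.map_zero] at this
      rw [inner_neg_left]
      linear_combination -this
    have hbv : L† ⟨b, hb'⟩ = -a := by
      apply adjoint_apply_eq hdense
      intro x
      have := congrArg (starRingEnd ℂ) (hrg x)
      simp only [_root_.map_add, inner_conj_symm, _root_.map_zero] at this
      rw [inner_neg_left]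
      linear_combination -this
    have : ⟪r, (WithLp.equiv 2 (K × K)).symm (u, w)⟫_ℂ = ⟪a, u⟫_ℂ + ⟪b, w⟫_ℂ := rfl
    rw [this]
    have h2 : ⟪b, w⟫_ℂ = ⟪-a, u⟫_ℂ := by
      have h3 := h ⟨b, hb'⟩
      rw [hbv] at h3
      have h4 := congrArg (starRingEnd ℂ) h3
      simpa only [inner_conj_symm] using h4
    rw [h2, inner_neg_left]
    ring
  rw [Submodule.orthogonal_orthogonal] at hmem
  rw [hmemGm, Equiv.apply_symm_apply] at hmem
  exact hmem

end Aux

open LinearPMap in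
/-- For a closed symmetric `L` with empty resolvent set, the operator
`A = L ⊕ L*` on `H = K ⊕ K` with `J(x,y) = (y,x)` satisfies: `J` is a self-adjoint
involution, `A` is `J`-self-adjoint (`A* = JAJ`), and `ρ(A) = ∅`. -/
theorem stmt7 {K : Type*} [NormedAddCommGroup K] [InnerProductSpace ℂ K] [CompleteSpace K]
    (L : K →ₗ.[ℂ] K) (hdense : Dense (L.domain : Set K))
    (hclosed : IsClosed (L.graph : Set (K × K)))
    (hsym : ∀ x y : L.domain, ⟪(L x : K), (y : K)⟫_ℂ = ⟪(x : K), (L y : K)⟫_ℂ)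
    (hρ : ResolventSet L = ∅)
    (A : WithLp 2 (K × K) →ₗ.[ℂ] WithLp 2 (K × K))
    (hAdom : ∀ p : WithLp 2 (K × K), p ∈ A.domain ↔
      (WithLp.equiv 2 (K × K) p).1 ∈ L.domain ∧
      (WithLp.equiv 2 (K × K) p).2 ∈ L.adjoint.domain)
    (hAval : ∀ (p : A.domain) (h1 : (WithLp.equiv 2 (K × K) (p : WithLp 2 (K × K))).1 ∈ L.domain)
      (h2 : (WithLp.equiv 2 (K × K) (p : WithLp 2 (K × K))).2 ∈ L.adjoint.domain),
      A p = (WithLp.equiv 2 (K × K)).symm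
        (L ⟨(WithLp.equiv 2 (K × K) (p : WithLp 2 (K × K))).1, h1⟩,
         L.adjoint ⟨(WithLp.equiv 2 (K × K) (p : WithLp 2 (K × K))).2, h2⟩))
    (J : WithLp 2 (K × K) →L[ℂ] WithLp 2 (K × K))
    (hJ : ∀ p : WithLp 2 (K × K), J p = (WithLp.equiv 2 (K × K)).symm
      ((WithLp.equiv 2 (K × K) p).2, (WithLp.equiv 2 (K × K) p).1)) :
    IsSelfAdjoint J ∧ J * J = 1 ∧
    (∀ p : WithLp 2 (K × K), p ∈ A.adjoint.domain ↔ J p ∈ A.domain) ∧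
    (∀ (p : A.adjoint.domain) (h : J (p : WithLp 2 (K × K)) ∈ A.domain),
      A.adjoint p = J (A ⟨J (p : WithLp 2 (K × K)), h⟩)) ∧
    ResolventSet A = ∅ := by
  -- the domain of `L†` contains the domain of `L`, hence is dense
  have hsub : (L.domain : Set K) ⊆ ((L†).domain : Set K) := by
    intro x hx
    exact mem_adjoint_domain_of_exists _ ⟨L ⟨x, hx⟩, fun y => hsym ⟨x, hx⟩ y⟩
  have hdense' : Dense (((L†).domain : Set K)) := hdense.mono hsub
  have hform : (L†).IsFormalAdjoint L := adjoint_isFormalAdjoint hdense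
  -- density of the domain of A
  have hAdense : Dense (A.domain : Set (WithLp 2 (K × K))) := by
    have h1 : Dense ((L.domain : Set K) ×ˢ ((L†).domain : Set K)) := hdense.prod hdense'
    have h2 := h1.preimage (f := ⇑(WithLp.prodContinuousLinearEquiv 2 ℂ K K))
      (WithLp.prodContinuousLinearEquiv 2 ℂ K K).toHomeomorph.isOpenMap
    refine h2.mono ?_
    intro q hq
    rw [Set.mem_preimage, Set.mem_prod] at hq
    exact (hAdom q).2 ⟨hq.1, hq.2⟩
  -- the forward analysis of the adjoint of A
  have hfwd : ∀ (pp : A.adjoint.domain),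
      ∃ (h1 : (WithLp.equiv 2 (K × K) (pp : WithLp 2 (K × K))).1 ∈ (L†).domain)
        (h2 : (WithLp.equiv 2 (K × K) (pp : WithLp 2 (K × K))).2 ∈ L.domain),
        A.adjoint pp = (WithLp.equiv 2 (K × K)).symm
          (L† ⟨(WithLp.equiv 2 (K × K) (pp : WithLp 2 (K × K))).1, h1⟩,
           L ⟨(WithLp.equiv 2 (K × K) (pp : WithLp 2 (K × K))).2, h2⟩) := by
    intro pp
    set p := (pp : WithLp 2 (K × K)) with hpdef
    set w := A.adjoint pp with hwdef
    have hAf : (A†).IsFormalAdjoint A := adjoint_isFormalAdjoint hAdense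
    have hclaim1 : ∀ x : L.domain, ⟪(WithLp.equiv 2 (K × K) w).1, (x : K)⟫_ℂ
        = ⟪(WithLp.equiv 2 (K × K) p).1, (L x : K)⟫_ℂ := by
      intro x
      have hqmem : (WithLp.equiv 2 (K × K)).symm ((x : K), (0 : K)) ∈ A.domain := by
        rw [hAdom, Equiv.apply_symm_apply]
        exact ⟨x.2, Submodule.zero_mem _⟩
      have hq1 : (WithLp.equiv 2 (K × K)
          ((WithLp.equiv 2 (K × K)).symm ((x : K), (0 : K)))).1 ∈ L.domain := by
        rw [Equiv.apply_symm_apply]; exact x.2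
      have hq2 : (WithLp.equiv 2 (K × K)
          ((WithLp.equiv 2 (K × K)).symm ((x : K), (0 : K)))).2 ∈ (L†).domain := by
        rw [Equiv.apply_symm_apply]; exact Submodule.zero_mem _
      have hinner := hAf pp ⟨_, hqmem⟩
      rw [hAval ⟨_, hqmem⟩ hq1 hq2] at hinner
      rw [show ((⟨_, hq1⟩ : L.domain)) = x from Subtype.ext rfl,
        show ((⟨_, hq2⟩ : (L†).domain)) = 0 from Subtype.ext rfl,
        LinearPMap.map_zero] at hinner
      rw [show ⟪(w : WithLp 2 (K × K)),
            ((⟨_, hqmem⟩ : A.domain) : WithLp 2 (K × K))⟫_ℂ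
          = ⟪(WithLp.equiv 2 (K × K) w).1, (x : K)⟫_ℂ
            + ⟪(WithLp.equiv 2 (K × K) w).2, (0 : K)⟫_ℂ from rfl,
        inner_pair_aux, inner_zero_right, inner_zero_right, add_zero, add_zero] at hinner
      exact hinner
    have hclaim2 : ∀ y : (L†).domain, ⟪(WithLp.equiv 2 (K × K) w).2, (y : K)⟫_ℂ
        = ⟪(WithLp.equiv 2 (K × K) p).2, (L† y : K)⟫_ℂ := by
      intro y
      have hqmem : (WithLp.equiv 2 (K × K)).symm ((0 : K), (y : K)) ∈ A.domain := by
        rw [hAdom, Equiv.apply_symm_apply]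
        exact ⟨Submodule.zero_mem _, y.2⟩
      have hq1 : (WithLp.equiv 2 (K × K)
          ((WithLp.equiv 2 (K × K)).symm ((0 : K), (y : K)))).1 ∈ L.domain := by
        rw [Equiv.apply_symm_apply]; exact Submodule.zero_mem _
      have hq2 : (WithLp.equiv 2 (K × K)
          ((WithLp.equiv 2 (K × K)).symm ((0 : K), (y : K)))).2 ∈ (L†).domain := by
        rw [Equiv.apply_symm_apply]; exact y.2
      have hinner := hAf pp ⟨_, hqmem⟩
      rw [hAval ⟨_, hqmem⟩ hq1 hq2] at hinner
      rw [show ((⟨_, hq1⟩ : L.domain)) = 0 from Subtype.ext rfl,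
        show ((⟨_, hq2⟩ : (L†).domain)) = y from Subtype.ext rfl,
        LinearPMap.map_zero] at hinner
      rw [show ⟪(w : WithLp 2 (K × K)),
            ((⟨_, hqmem⟩ : A.domain) : WithLp 2 (K × K))⟫_ℂ
          = ⟪(WithLp.equiv 2 (K × K) w).1, (0 : K)⟫_ℂ
            + ⟪(WithLp.equiv 2 (K × K) w).2, (y : K)⟫_ℂ from rfl,
        inner_pair_aux, inner_zero_right, inner_zero_right, zero_add, zero_add] at hinner
      exact hinner
    have h1 : (WithLp.equiv 2 (K × K) p).1 ∈ (L†).domain :=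
      mem_adjoint_domain_of_exists _ ⟨(WithLp.equiv 2 (K × K) w).1, hclaim1⟩
    have hv1 : L† ⟨(WithLp.equiv 2 (K × K) p).1, h1⟩ = (WithLp.equiv 2 (K × K) w).1 :=
      adjoint_apply_eq hdense _ hclaim1
    have hgr : ((WithLp.equiv 2 (K × K) p).2, (WithLp.equiv 2 (K × K) w).2) ∈ L.graph :=
      aux_closed_graph_adjoint L hdense hclosed _ _ hclaim2
    rw [L.mem_graph_iff] at hgr
    obtain ⟨z, hz1, hz2⟩ := hgr
    replace hz1 : (z : K) = (WithLp.equiv 2 (K × K) p).2 := hz1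
    replace hz2 : (L z : K) = (WithLp.equiv 2 (K × K) w).2 := hz2
    have h2 : (WithLp.equiv 2 (K × K) p).2 ∈ L.domain := hz1 ▸ z.2
    have hv2 : L ⟨(WithLp.equiv 2 (K × K) p).2, h2⟩ = (WithLp.equiv 2 (K × K) w).2 := by
      rw [show (⟨(WithLp.equiv 2 (K × K) p).2, h2⟩ : L.domain) = z from Subtype.ext hz1.symm]
      exact hz2
    refine ⟨h1, h2, ?_⟩
    rw [pair_eq_iff_aux]
    exact ⟨hv1.symm, hv2.symm⟩
  refine ⟨?_, ?_, ?_, ?_, ?_⟩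
  · -- J is self-adjoint
    rw [ContinuousLinearMap.isSelfAdjoint_iff_isSymmetric]
    intro pq q
    show ⟪J pq, q⟫_ℂ = ⟪pq, J q⟫_ℂ
    rw [hJ pq, hJ q, pair_inner_aux, inner_pair_aux]
    ring
  · -- J * J = 1
    ext1 q
    rw [ContinuousLinearMap.mul_apply, ContinuousLinearMap.one_apply, hJ (J q), hJ q,
      Equiv.apply_symm_apply]
    exact (WithLp.equiv 2 (K × K)).symm_apply_apply q
  · -- domain characterization
    intro p
    constructor
    · intro hp
      obtain ⟨h1, h2, -⟩ := hfwd ⟨p, hp⟩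
      rw [hAdom, hJ, Equiv.apply_symm_apply]
      exact ⟨h2, h1⟩
    · intro h
      rw [hAdom, hJ, Equiv.apply_symm_apply] at h
      apply mem_adjoint_domain_of_exists
      refine ⟨(WithLp.equiv 2 (K × K)).symm
        (L† ⟨(WithLp.equiv 2 (K × K) p).1, h.2⟩, L ⟨(WithLp.equiv 2 (K × K) p).2, h.1⟩),
        fun q => ?_⟩
      have hq1 : (WithLp.equiv 2 (K × K) (q : WithLp 2 (K × K))).1 ∈ L.domain :=
        ((hAdom _).1 q.2).1
      have hq2 : (WithLp.equiv 2 (K × K) (q : WithLp 2 (K × K))).2 ∈ (L†).domain :=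
        ((hAdom _).1 q.2).2
      rw [hAval q hq1 hq2, pair_inner_aux, inner_pair_aux]
      have e1 : ⟪(L† ⟨(WithLp.equiv 2 (K × K) p).1, h.2⟩ : K),
          (WithLp.equiv 2 (K × K) (q : WithLp 2 (K × K))).1⟫_ℂ
          = ⟪(WithLp.equiv 2 (K × K) p).1, (L ⟨_, hq1⟩ : K)⟫_ℂ :=
        hform ⟨_, h.2⟩ ⟨_, hq1⟩
      have e2 : ⟪(L ⟨(WithLp.equiv 2 (K × K) p).2, h.1⟩ : K),
          (WithLp.equiv 2 (K × K) (q : WithLp 2 (K × K))).2⟫_ℂ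
          = ⟪(WithLp.equiv 2 (K × K) p).2, (L† ⟨_, hq2⟩ : K)⟫_ℂ := by
        have h4 := congrArg (starRingEnd ℂ) (hform ⟨_, hq2⟩ ⟨_, h.1⟩)
        simpa only [inner_conj_symm] using h4.symm
      rw [e1, e2]
  · -- value of the adjoint
    intro pp h
    obtain ⟨h1, h2, hval⟩ := hfwd pp
    have hkey : WithLp.equiv 2 (K × K)
        ((⟨J (pp : WithLp 2 (K × K)), h⟩ : A.domain) : WithLp 2 (K × K))
        = ((WithLp.equiv 2 (K × K) (pp : WithLp 2 (K × K))).2,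
           (WithLp.equiv 2 (K × K) (pp : WithLp 2 (K × K))).1) := by
      show WithLp.equiv 2 (K × K) (J (pp : WithLp 2 (K × K))) = _
      rw [hJ, Equiv.apply_symm_apply]
    have hh1 : (WithLp.equiv 2 (K × K)
        ((⟨J (pp : WithLp 2 (K × K)), h⟩ : A.domain) : WithLp 2 (K × K))).1 ∈ L.domain := by
      show (WithLp.equiv 2 (K × K) (J (pp : WithLp 2 (K × K)))).1 ∈ L.domain
      rw [hJ, Equiv.apply_symm_apply]; exact h2
    have hh2 : (WithLp.equiv 2 (K × K)
        ((⟨J (pp : WithLp 2 (K × K)), h⟩ : A.domain) : WithLp 2 (K × K))).2 ∈ (L†).domain := by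
      show (WithLp.equiv 2 (K × K) (J (pp : WithLp 2 (K × K)))).2 ∈ (L†).domain
      rw [hJ, Equiv.apply_symm_apply]; exact h1
    have e1 : (⟨(WithLp.equiv 2 (K × K)
        ((⟨J (pp : WithLp 2 (K × K)), h⟩ : A.domain) : WithLp 2 (K × K))).1, hh1⟩ : L.domain)
        = ⟨(WithLp.equiv 2 (K × K) (pp : WithLp 2 (K × K))).2, h2⟩ :=
      Subtype.ext (by
        show (WithLp.equiv 2 (K × K) (J (pp : WithLp 2 (K × K)))).1 = _
        rw [hJ, Equiv.apply_symm_apply])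
    have e2 : (⟨(WithLp.equiv 2 (K × K)
        ((⟨J (pp : WithLp 2 (K × K)), h⟩ : A.domain) : WithLp 2 (K × K))).2, hh2⟩ : (L†).domain)
        = ⟨(WithLp.equiv 2 (K × K) (pp : WithLp 2 (K × K))).1, h1⟩ :=
      Subtype.ext (by
        show (WithLp.equiv 2 (K × K) (J (pp : WithLp 2 (K × K)))).2 = _
        rw [hJ, Equiv.apply_symm_apply])
    rw [hval, hAval ⟨J (pp : WithLp 2 (K × K)), h⟩ hh1 hh2, e1, e2, hJ, Equiv.apply_symm_apply]
  · -- the resolvent set of A is empty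
    rw [Set.eq_empty_iff_forall_notMem]
    intro mu hmu
    obtain ⟨B, hB, hc1, hc2⟩ := hmu
    have hmuL : mu ∈ ResolventSet L := by
      set e := WithLp.prodContinuousLinearEquiv 2 ℂ K K with he
      set B1 : K →L[ℂ] K := (ContinuousLinearMap.fst ℂ K K).comp
        ((e : WithLp 2 (K × K) →L[ℂ] K × K).comp (B.comp
          ((e.symm : K × K →L[ℂ] WithLp 2 (K × K)).comp (ContinuousLinearMap.inl ℂ K K))))
        with hB1def
      have hB1app : ∀ x : K, B1 x
          = (WithLp.equiv 2 (K × K) (B ((WithLp.equiv 2 (K × K)).symm (x, 0)))).1 :=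
        fun x => rfl
      have hBmem : ∀ x : K, B1 x ∈ L.domain := by
        intro x
        rw [hB1app]
        exact ((hAdom _).1 (hB _)).1
      refine ⟨B1, hBmem, ?_, ?_⟩
      · intro x
        have h0 := hc1 ((WithLp.equiv 2 (K × K)).symm (x, 0))
        have hq1 : (WithLp.equiv 2 (K × K)
            (B ((WithLp.equiv 2 (K × K)).symm (x, 0)))).1 ∈ L.domain :=
          ((hAdom _).1 (hB _)).1
        have hq2 : (WithLp.equiv 2 (K × K)
            (B ((WithLp.equiv 2 (K × K)).symm (x, 0)))).2 ∈ (L†).domain :=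
          ((hAdom _).1 (hB _)).2
        rw [hAval ⟨_, hB _⟩ hq1 hq2] at h0
        have h0' := congrArg (fun r => (WithLp.equiv 2 (K × K) r).1) h0
        simp only at h0'
        exact h0'
      · intro x
        have hmem : (WithLp.equiv 2 (K × K)).symm ((x : K), (0 : K)) ∈ A.domain := by
          rw [hAdom, Equiv.apply_symm_apply]
          exact ⟨x.2, Submodule.zero_mem _⟩
        have hq1 : (WithLp.equiv 2 (K × K)
            ((WithLp.equiv 2 (K × K)).symm ((x : K), (0 : K)))).1 ∈ L.domain := by
          rw [Equiv.apply_symm_apply]; exact x.2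
        have hq2 : (WithLp.equiv 2 (K × K)
            ((WithLp.equiv 2 (K × K)).symm ((x : K), (0 : K)))).2 ∈ (L†).domain := by
          rw [Equiv.apply_symm_apply]; exact Submodule.zero_mem _
        have h0 := hc2 ⟨_, hmem⟩
        rw [hAval ⟨_, hmem⟩ hq1 hq2,
          show ((⟨_, hq1⟩ : L.domain)) = x from Subtype.ext rfl,
          show ((⟨_, hq2⟩ : (L†).domain)) = 0 from Subtype.ext rfl,
          LinearPMap.map_zero] at h0
        have h0' : B ((WithLp.equiv 2 (K × K)).symm ((L x : K), (0 : K))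
            - mu • (WithLp.equiv 2 (K × K)).symm ((x : K), (0 : K)))
            = (WithLp.equiv 2 (K × K)).symm ((x : K), (0 : K)) := h0
        have harg : (WithLp.equiv 2 (K × K)).symm ((L x : K), (0 : K))
            - mu • (WithLp.equiv 2 (K × K)).symm ((x : K), (0 : K))
            = (WithLp.equiv 2 (K × K)).symm ((L x : K) - mu • (x : K), (0 : K)) := by
          rw [show ((WithLp.equiv 2 (K × K)).symm : K × K → WithLp 2 (K × K))
              = ⇑(WithLp.linearEquiv 2 ℂ (K × K)).symm from rfl,
            ← _root_.map_smul, ← _root_.map_sub]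
          congr 1
          simp [Prod.ext_iff]
        rw [harg] at h0'
        exact congrArg (fun r => (WithLp.equiv 2 (K × K) r).1) h0'
    rw [hρ] at hmuL
    exact hmuL
end

section
/- Let A be a densely defined operator on a complex Hilbert space with A* = JAJ for a self-adjoint involution J, and suppose there is a bounded operator C with C² = I, JC > 0, and AC = CA (C maps dom A into dom A and commutes with A there). Then A is similar to a self-adjoint operator: there is a bounded boundedly invertible operator T such that TAT⁻¹ is self-adjoint. -/
open scoped InnerProductSpace LinearPMap

set_option maxHeartbeats 1000000 in
set_option synthInstance.maxHeartbeats 1000000 in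
/-- A `J`-self-adjoint operator `A` (i.e. `A* = JAJ`) possessing a `C`-symmetry
(`C² = I`, `JC > 0`, `AC = CA`) is similar to a self-adjoint operator: there is a bounded
boundedly invertible `T` such that `T A T⁻¹` is self-adjoint. -/
theorem stmt10 {H : Type*} [NormedAddCommGroup H] [InnerProductSpace ℂ H] [CompleteSpace H]
    (A : H →ₗ.[ℂ] H) (hdense : Dense (A.domain : Set H))
    (J : H →L[ℂ] H) (hJsa : IsSelfAdjoint J) (hJ2 : J * J = 1)
    (hdom : ∀ x : H, x ∈ A.adjoint.domain ↔ J x ∈ A.domain)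
    (hval : ∀ (x : A.adjoint.domain) (h : J (x : H) ∈ A.domain),
      A.adjoint x = J (A ⟨J (x : H), h⟩))
    (C : H →L[ℂ] H) (hC2 : C * C = 1)
    (hJCpos : (J * C).IsPositive)
    (hJCposdef : ∀ x : H, x ≠ 0 → 0 < (⟪(J * C) x, x⟫_ℂ).re)
    (hJCinv : ∃ D : H →L[ℂ] H, (J * C) * D = 1 ∧ D * (J * C) = 1)
    (hAC : ∀ x : A.domain, ∃ h : C x ∈ A.domain, A ⟨C x, h⟩ = C (A x)) :
    ∃ T : H ≃L[ℂ] H, ∃ B : H →ₗ.[ℂ] H, IsSelfAdjoint B ∧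
      B.domain = A.domain.map (T.toLinearEquiv.toLinearMap) ∧
      ∀ (x : A.domain) (h : T (x : H) ∈ B.domain), B ⟨T (x : H), h⟩ = T (A x) := by
  classical
  set G : H →L[ℂ] H := J * C with hGdef
  set Dc : H →L[ℂ] H := C * J with hDcdef
  have hGD : G * Dc = 1 := by
    rw [hGdef, hDcdef, mul_assoc, ← mul_assoc C C J, hC2, one_mul, hJ2]
  have hDG : Dc * G = 1 := by
    rw [hGdef, hDcdef, mul_assoc, ← mul_assoc J J C, hJ2, one_mul, hC2]
  have hGpos : (0 : H →L[ℂ] H) ≤ G := (ContinuousLinearMap.nonneg_iff_isPositive _).mpr hJCpos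
  have hGsa : IsSelfAdjoint G := hJCpos.isSelfAdjoint
  set T0 : H →L[ℂ] H := CFC.sqrt G with hT0def
  have hT02 : T0 * T0 = G := CFC.sqrt_mul_sqrt_self G hGpos
  have hT0sa : IsSelfAdjoint T0 :=
    ((ContinuousLinearMap.nonneg_iff_isPositive _).mp (CFC.sqrt_nonneg G)).isSelfAdjoint
  have hTG : T0 * G = G * T0 := by rw [← hT02, mul_assoc]
  have hDcT0 : Dc * T0 = T0 * Dc := by
    have e1 : Dc * (T0 * G) * Dc = Dc * T0 := by
      rw [← mul_assoc Dc T0 G, mul_assoc (Dc * T0) G Dc, hGD, mul_one]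
    have e2 : Dc * (G * T0) * Dc = T0 * Dc := by
      rw [← mul_assoc Dc G T0, hDG, one_mul]
    have e3 : Dc * (T0 * G) * Dc = Dc * (G * T0) * Dc := by rw [hTG]
    exact e1.symm.trans (e3.trans e2)
  set S : H →L[ℂ] H := T0 * Dc with hSdef
  have hTS : T0 * S = 1 := by rw [hSdef, ← mul_assoc, hT02, hGD]
  have hST : S * T0 = 1 := by rw [hSdef, mul_assoc, hDcT0, ← mul_assoc, hT02, hGD]
  have hTSx : ∀ x : H, T0 (S x) = x := fun x => by
    rw [← ContinuousLinearMap.mul_apply, hTS, ContinuousLinearMap.one_apply]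
  have hSTx : ∀ x : H, S (T0 x) = x := fun x => by
    rw [← ContinuousLinearMap.mul_apply, hST, ContinuousLinearMap.one_apply]
  -- inner product identities
  have hTinner : ∀ x y : H, ⟪T0 x, y⟫_ℂ = ⟪x, T0 y⟫_ℂ := fun x y => by
    conv_lhs => rw [← hT0sa.adjoint_eq]
    exact ContinuousLinearMap.adjoint_inner_left T0 y x
  have hGinner : ∀ x y : H, ⟪G x, y⟫_ℂ = ⟪x, G y⟫_ℂ := fun x y => by
    conv_lhs => rw [← hGsa.adjoint_eq]
    exact ContinuousLinearMap.adjoint_inner_left G y x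
  -- the similarity transform
  set T : H ≃L[ℂ] H :=
    { toLinearEquiv := LinearEquiv.ofLinear T0.toLinearMap S.toLinearMap
        (LinearMap.ext fun x => hTSx x) (LinearMap.ext fun x => hSTx x)
      continuous_toFun := T0.continuous
      continuous_invFun := S.continuous } with hTdef
  have hTapp : ∀ x : H, T x = T0 x := fun _ => rfl
  set dom : Submodule ℂ H := A.domain.map (T.toLinearEquiv.toLinearMap) with hdomdef
  set e : A.domain ≃ₗ[ℂ] dom := T.toLinearEquiv.submoduleMap A.domain with hedef
  have heapp : ∀ x : A.domain, ((e x : H)) = T0 (x : H) := fun x =>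
    T.toLinearEquiv.submoduleMap_apply A.domain x
  set B : H →ₗ.[ℂ] H :=
    ⟨dom, T0.toLinearMap ∘ₗ (A.toFun ∘ₗ e.symm.toLinearMap)⟩ with hBdef
  have hBapply : ∀ (x : A.domain) (h : T0 (x : H) ∈ dom), B ⟨T0 (x : H), h⟩ = T0 (A x) := by
    intro x h
    have hx : e x = ⟨T0 (x : H), h⟩ := Subtype.ext (heapp x)
    show T0 (A (e.symm ⟨T0 (x : H), h⟩)) = T0 (A x)
    rw [← hx, LinearEquiv.symm_apply_apply]
  have hTmem : ∀ x : A.domain, T0 (x : H) ∈ dom := fun x =>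
    ⟨(x : H), x.2, rfl⟩
  have hmem : ∀ y : H, y ∈ dom ↔ S y ∈ A.domain := by
    intro y
    constructor
    · rintro ⟨a, ha, rfl⟩
      show S (T0 a) ∈ A.domain
      rw [hSTx]; exact ha
    · intro h
      exact ⟨S y, h, hTSx y⟩
  have hBdense : Dense (dom : Set H) := by
    have hsurj : Function.Surjective (T0 : H → H) := fun y => ⟨S y, hTSx y⟩
    have : Dense ((T0 : H → H) '' (A.domain : Set H)) :=
      hsurj.denseRange.dense_image T0.continuous hdense
    have himg : ((dom : Submodule ℂ H) : Set H) = (T0 : H → H) '' (A.domain : Set H) := by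
      ext z
      constructor
      · rintro ⟨a, ha, rfl⟩; exact ⟨a, ha, rfl⟩
      · rintro ⟨a, ha, rfl⟩; exact ⟨a, ha, rfl⟩
    rw [himg]
    exact this
  -- key symmetry identity
  have hkey : ∀ p q : A.domain, ⟪(A p : H), G (q : H)⟫_ℂ = ⟪G (p : H), (A q : H)⟫_ℂ := by
    intro p q
    obtain ⟨hCp, hCval⟩ := hAC p
    -- w := G p = J (C p)
    have hw : G (p : H) ∈ A.adjoint.domain := by
      rw [hdom]
      have : J (G (p : H)) = C (p : H) := by
        rw [hGdef]
        calc J ((J * C) (p : H)) = (J * (J * C)) (p : H) := rfl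
        _ = C (p : H) := by rw [← mul_assoc, hJ2, one_mul]
      rw [this]; exact hCp
    have hJw : J (G (p : H)) ∈ A.domain := (hdom _).mp hw
    have hJweq : J (G (p : H)) = C (p : H) := by
      rw [hGdef]
      calc J ((J * C) (p : H)) = (J * (J * C)) (p : H) := rfl
      _ = C (p : H) := by rw [← mul_assoc, hJ2, one_mul]
    have hvalw : A.adjoint ⟨G (p : H), hw⟩ = G (A p) := by
      rw [hval ⟨G (p : H), hw⟩ hJw]
      have : (⟨J (G (p : H)), hJw⟩ : A.domain) = ⟨C (p : H), hCp⟩ := Subtype.ext hJweq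
      rw [this, hCval, hGdef]
      rfl
    have := A.adjoint_isFormalAdjoint hdense ⟨G (p : H), hw⟩ q
    rw [hvalw] at this
    -- this : ⟪G (A p), q⟫ = ⟪G p, A q⟫
    rw [← this, hGinner]
  have hBform : B.IsFormalAdjoint B := by
    rintro x y
    set a : A.domain := e.symm x with hadef
    set b : A.domain := e.symm y with hbdef
    have hxa : (x : H) = T0 (a : H) := by
      rw [hadef, ← heapp (e.symm x), LinearEquiv.apply_symm_apply]
    have hyb : (y : H) = T0 (b : H) := by
      rw [hbdef, ← heapp (e.symm y), LinearEquiv.apply_symm_apply]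
    have hBx : B x = T0 (A a) := rfl
    have hBy : B y = T0 (A b) := rfl
    rw [hBx, hBy, hxa, hyb]
    have hG1 : T0 (T0 ((A a : H))) = G (A a) := by
      rw [← ContinuousLinearMap.mul_apply, hT02]
    have hG2 : T0 (T0 ((a : H))) = G (a : H) := by
      rw [← ContinuousLinearMap.mul_apply, hT02]
    calc ⟪T0 (A a : H), T0 (b : H)⟫_ℂ = ⟪T0 (T0 (A a : H)), (b : H)⟫_ℂ := (hTinner _ _).symm
    _ = ⟪G (A a : H), (b : H)⟫_ℂ := by rw [hG1]
    _ = ⟪(A a : H), G (b : H)⟫_ℂ := hGinner _ _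
    _ = ⟪G (a : H), (A b : H)⟫_ℂ := hkey a b
    _ = ⟪T0 (T0 (a : H)), (A b : H)⟫_ℂ := by rw [hG2]
    _ = ⟪T0 (a : H), T0 (A b : H)⟫_ℂ := hTinner _ _
  have hle : B ≤ B.adjoint := hBform.le_adjoint hBdense
  have hdomle : B.adjoint.domain ≤ B.domain := by
    intro y hy
    set z : H := B.adjoint ⟨y, hy⟩ with hzdef
    have hz : ∀ v : B.domain, ⟪z, (v : H)⟫_ℂ = ⟪y, B v⟫_ℂ := fun v =>
      B.adjoint_isFormalAdjoint hBdense ⟨y, hy⟩ v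
    have hTy : T0 y ∈ A.adjoint.domain := by
      apply LinearPMap.mem_adjoint_domain_of_exists
      refine ⟨T0 z, fun u => ?_⟩
      have h1 : ⟪T0 z, (u : H)⟫_ℂ = ⟪z, T0 (u : H)⟫_ℂ := hTinner _ _
      have h2 : ⟪z, T0 (u : H)⟫_ℂ = ⟪y, B ⟨T0 (u : H), hTmem u⟩⟫_ℂ :=
        hz ⟨T0 (u : H), hTmem u⟩
      rw [h1, h2, hBapply u (hTmem u), ← hTinner]
    have hJTy : J (T0 y) ∈ A.domain := (hdom _).mp hTy
    obtain ⟨hCJTy, -⟩ := hAC ⟨J (T0 y), hJTy⟩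
    have hSy : C (J (T0 y)) = S y := by
      calc C (J (T0 y)) = ((C * J) * T0) y := rfl
      _ = S y := by rw [← hDcdef, hDcT0]
    rw [hSy] at hCJTy
    exact (hmem y).mpr hCJTy
  have hdomeq : B.adjoint.domain = B.domain := le_antisymm hdomle hle.1
  have hBsa : B.adjoint = B := by
    apply LinearPMap.ext hdomeq
    intro x hf hg
    exact (hle.2 (rfl : ((⟨x, hg⟩ : B.domain) : H) = ((⟨x, hf⟩ : B.adjoint.domain) : H))).symm
  refine ⟨T, B, LinearPMap.isSelfAdjoint_def.mpr hBsa, rfl, ?_⟩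
  intro x h
  exact hBapply x h
end

section
/- Let s₊, s₋ : ℂ₊ → ℂ be holomorphic functions on the upper half-plane with s₊(i) = s₋(i) = 0. Fix φ, γ, ξ ∈ [0,2π) and q, r ≥ 0 with q² + r² = 1. The 2×2 determinant det [[q e^{i(φ+γ)}, -1 + r e^{i(φ-ξ)} s₋(μ)], [r e^{i(φ+ξ)} + s₊(μ), -q e^{i(φ-γ)} s₋(μ)]] vanishes for all μ ∈ ℂ₊ if and only if r = 0 and e^{2iφ} s₋(μ) = s₊(μ) for all μ ∈ ℂ₊. -/
open Complex

/-- For holomorphic `s₊, s₋` on the upper half-plane vanishing at `i`, and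
parameters `q, r ≥ 0`, `q² + r² = 1`, `φ, γ, ξ ∈ [0,2π)`, the determinant
`det [[q e^{i(φ+γ)}, -1 + r e^{i(φ-ξ)} s₋(μ)], [r e^{i(φ+ξ)} + s₊(μ), -q e^{i(φ-γ)} s₋(μ)]]`
vanishes for all `μ ∈ ℂ₊` iff `r = 0` and `e^{2iφ} s₋ = s₊` on `ℂ₊`. -/
theorem stmt13 (sp sm : ℂ → ℂ)
    (hsp : DifferentiableOn ℂ sp {z : ℂ | 0 < z.im})
    (hsm : DifferentiableOn ℂ sm {z : ℂ | 0 < z.im})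
    (hspi : sp Complex.I = 0) (hsmi : sm Complex.I = 0)
    (φ γ ξ q r : ℝ)
    (hφ : 0 ≤ φ ∧ φ < 2 * Real.pi) (hγ : 0 ≤ γ ∧ γ < 2 * Real.pi)
    (hξ : 0 ≤ ξ ∧ ξ < 2 * Real.pi)
    (hq : 0 ≤ q) (hr : 0 ≤ r) (hqr : q ^ 2 + r ^ 2 = 1) :
    (∀ μ : ℂ, 0 < μ.im →
        ((q : ℂ) * Complex.exp (Complex.I * (φ + γ))) *
          (-((q : ℂ) * Complex.exp (Complex.I * (φ - γ))) * sm μ) -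
        (-1 + (r : ℂ) * Complex.exp (Complex.I * (φ - ξ)) * sm μ) *
          ((r : ℂ) * Complex.exp (Complex.I * (φ + ξ)) + sp μ) = 0) ↔
      (r = 0 ∧ ∀ μ : ℂ, 0 < μ.im → Complex.exp (2 * Complex.I * φ) * sm μ = sp μ) := by
  have hexp : Complex.exp (Complex.I * (φ + γ)) * Complex.exp (Complex.I * (φ - γ))
      = Complex.exp (2 * Complex.I * φ) := by
    rw [← Complex.exp_add]; ring_nf
  constructor
  · intro h
    have hi := h Complex.I (by simp)
    rw [hspi, hsmi] at hi
    simp only [mul_zero, add_zero, zero_add, mul_neg, neg_mul] at hi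
    have hr0 : r = 0 := by
      have hi' : (r : ℂ) * Complex.exp (Complex.I * ((φ : ℂ) + ξ)) = 0 := by
        linear_combination hi
      rcases mul_eq_zero.mp hi' with h0 | h0
      · exact_mod_cast h0
      · exact absurd h0 (Complex.exp_ne_zero _)
    subst hr0
    have hq2 : (q : ℂ) ^ 2 = 1 := by
      have : q ^ 2 = 1 := by nlinarith
      exact_mod_cast this
    refine ⟨rfl, fun μ hμ => ?_⟩
    have hμ' := h μ hμ
    push_cast at hμ'
    linear_combination -hμ' - sm μ * hexp -
      1 * Complex.exp (Complex.I * (φ + γ)) * Complex.exp (Complex.I * (φ - γ)) * sm μ * hq2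
  · rintro ⟨hr0, heq⟩ μ hμ
    subst hr0
    have hq2 : (q : ℂ) ^ 2 = 1 := by
      have : q ^ 2 = 1 := by nlinarith
      exact_mod_cast this
    push_cast
    linear_combination -heq μ hμ - sm μ * hexp -
      1 * Complex.exp (Complex.I * (φ + γ)) * Complex.exp (Complex.I * (φ - γ)) * sm μ * hq2
end

section
/- Conversely, let S be a densely defined closed symmetric operator commuting with a self-adjoint involution J, with eigenspace decomposition H = H₊ ⊕ H₋ and parts S₊, S₋. If there exists a unitary W : H₊ → H₋ with S₊ = W⁻¹ S₋ W, then the operator R defined blockwise by R(x₊, x₋) = (W⁻¹x₋, Wx₊) is a self-adjoint involution on H satisfying SR = RS and JR = -RJ. -/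
open scoped InnerProductSpace LinearPMap

/-- Conversely, if the parts `S₊`, `S₋` of a closed symmetric `S` commuting
with a self-adjoint involution `J` are unitarily equivalent via `W : H₊ → H₋`
(`S₊ = W⁻¹ S₋ W`), then the blockwise operator `R(x₊, x₋) = (W⁻¹x₋, Wx₊)` is a self-adjoint
involution with `SR = RS` and `JR = -RJ`. -/
theorem stmt17 {H : Type*} [NormedAddCommGroup H] [InnerProductSpace ℂ H] [CompleteSpace H]
    (S : H →ₗ.[ℂ] H) (hdense : Dense (S.domain : Set H))
    (hclosed : IsClosed (S.graph : Set (H × H)))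
    (hsym : ∀ x y : S.domain, ⟪(S x : H), (y : H)⟫_ℂ = ⟪(x : H), (S y : H)⟫_ℂ)
    (J : H →L[ℂ] H) (hJsa : IsSelfAdjoint J) (hJ2 : J * J = 1)
    (hSJ : ∀ x : S.domain, ∃ h : J x ∈ S.domain, S ⟨J x, h⟩ = J (S x))
    (Hp Hm : Submodule ℂ H)
    (hHp : Hp = LinearMap.ker ((J - 1 : H →L[ℂ] H) : H →ₗ[ℂ] H)) (hHm : Hm = LinearMap.ker ((J + 1 : H →L[ℂ] H) : H →ₗ[ℂ] H))
    (W : Hp ≃ₗᵢ[ℂ] Hm)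
    -- `W` maps `dom S₊` into `dom S₋` and intertwines: `S₊ = W⁻¹ S₋ W`
    (hWS : ∀ (x : H) (hx : x ∈ Hp) (hxd : x ∈ S.domain),
      ∃ hd : ((W ⟨x, hx⟩ : Hm) : H) ∈ S.domain,
      ∃ hm : (S ⟨((W ⟨x, hx⟩ : Hm) : H), hd⟩) ∈ Hm,
        S ⟨x, hxd⟩ = ((W.symm ⟨S ⟨((W ⟨x, hx⟩ : Hm) : H), hd⟩, hm⟩ : Hp) : H))
    -- `W⁻¹` maps `dom S₋` into `dom S₊`
    (hWonto : ∀ (y : H) (hy : y ∈ Hm), y ∈ S.domain →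
      ((W.symm ⟨y, hy⟩ : Hp) : H) ∈ S.domain)
    (R : H →L[ℂ] H)
    (hRp : ∀ (x : H) (hx : x ∈ Hp), R x = ((W ⟨x, hx⟩ : Hm) : H))
    (hRm : ∀ (y : H) (hy : y ∈ Hm), R y = ((W.symm ⟨y, hy⟩ : Hp) : H)) :
    IsSelfAdjoint R ∧ R * R = 1 ∧ J * R = -(R * J) ∧
    ∀ x : S.domain, ∃ h : R x ∈ S.domain, S ⟨R x, h⟩ = R (S x) := by
  -- Basic facts about J
  have hJJ : ∀ x : H, J (J x) = x := by
    intro x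
    have := congrFun (congrArg (DFunLike.coe) hJ2) x
    simpa using this
  have hmemp : ∀ x : H, x ∈ Hp ↔ J x = x := by
    intro x
    rw [hHp, LinearMap.mem_ker]
    simp [sub_eq_zero]
  have hmemm : ∀ x : H, x ∈ Hm ↔ J x = -x := by
    intro x
    rw [hHm, LinearMap.mem_ker]
    simp [add_eq_zero_iff_eq_neg]
  have hpmem : ∀ x : H, (2:ℂ)⁻¹ • (x + J x) ∈ Hp := by
    intro x
    rw [hmemp]
    rw [map_smul, map_add, hJJ]
    module
  have hmmem : ∀ x : H, (2:ℂ)⁻¹ • (x - J x) ∈ Hm := by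
    intro x
    rw [hmemm]
    rw [map_smul, map_sub, hJJ]
    module
  have hsplit : ∀ x : H, (2:ℂ)⁻¹ • (x + J x) + (2:ℂ)⁻¹ • (x - J x) = x := by
    intro x; module
  have hJsplit : ∀ x : H, (2:ℂ)⁻¹ • (x + J x) - (2:ℂ)⁻¹ • (x - J x) = J x := by
    intro x; module
  have hR : ∀ x : H, R x = ((W ⟨(2:ℂ)⁻¹ • (x + J x), hpmem x⟩ : Hm) : H)
      + ((W.symm ⟨(2:ℂ)⁻¹ • (x - J x), hmmem x⟩ : Hp) : H) := by
    intro x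
    conv_lhs => rw [← hsplit x]
    rw [map_add, hRp _ (hpmem x), hRm _ (hmmem x)]
  -- orthogonality
  have hJip : ∀ u v : H, ⟪J u, v⟫_ℂ = ⟪u, J v⟫_ℂ := by
    intro u v
    exact (ContinuousLinearMap.isSelfAdjoint_iff_isSymmetric.mp hJsa) u v
  have horth : ∀ u v : H, u ∈ Hp → v ∈ Hm → ⟪u, v⟫_ℂ = 0 := by
    intro u v hu hv
    have h1 := hJip u v
    rw [(hmemp u).mp hu, (hmemm v).mp hv, inner_neg_right] at h1
    exact CharZero.eq_neg_self_iff.mp h1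
  have horth' : ∀ u v : H, u ∈ Hm → v ∈ Hp → ⟪u, v⟫_ℂ = 0 := by
    intro u v hu hv
    rw [← inner_conj_symm, horth v u hv hu, map_zero]
  have lemA : ∀ (u v : H) (hu : u ∈ Hp) (hv : v ∈ Hm),
      ⟪((W ⟨u, hu⟩ : Hm) : H), v⟫_ℂ = ⟪u, ((W.symm ⟨v, hv⟩ : Hp) : H)⟫_ℂ := by
    intro u v hu hv
    have h := W.inner_map_map ⟨u, hu⟩ (W.symm ⟨v, hv⟩)
    rw [W.apply_symm_apply] at h
    simpa [Submodule.coe_inner] using h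
  have lemB : ∀ (u v : H) (hu : u ∈ Hm) (hv : v ∈ Hp),
      ⟪((W.symm ⟨u, hu⟩ : Hp) : H), v⟫_ℂ = ⟪u, ((W ⟨v, hv⟩ : Hm) : H)⟫_ℂ := by
    intro u v hu hv
    have h := W.symm.inner_map_map ⟨u, hu⟩ (W ⟨v, hv⟩)
    rw [W.symm_apply_apply] at h
    simpa [Submodule.coe_inner] using h
  refine ⟨?_, ?_, ?_, ?_⟩
  · -- self-adjoint
    rw [ContinuousLinearMap.isSelfAdjoint_iff_isSymmetric]
    intro x y
    show ⟪R x, y⟫_ℂ = ⟪x, R y⟫_ℂ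
    rw [hR x, hR y]
    conv_lhs => rw [← hsplit y]
    conv_rhs => rw [← hsplit x]
    simp only [inner_add_left, inner_add_right]
    rw [horth' _ _ (W ⟨_, hpmem x⟩).2 (hpmem y),
      horth _ _ (W.symm ⟨_, hmmem x⟩).2 (hmmem y),
      horth _ _ (hpmem x) (W ⟨_, hpmem y⟩).2,
      horth' _ _ (hmmem x) (W.symm ⟨_, hmmem y⟩).2,
      lemA _ _ (hpmem x) (hmmem y), lemB _ _ (hmmem x) (hpmem y)]
  · -- involution
    ext x
    rw [ContinuousLinearMap.mul_apply, ContinuousLinearMap.one_apply, hR x, map_add,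
      hRm _ (W ⟨_, hpmem x⟩).2, hRp _ (W.symm ⟨_, hmmem x⟩).2]
    simp only [Subtype.coe_eta]
    rw [W.symm_apply_apply, W.apply_symm_apply]
    exact hsplit x
  · -- anticommutes with J
    ext x
    have h1 : J ((W ⟨(2:ℂ)⁻¹ • (x + J x), hpmem x⟩ : Hm) : H)
        = -((W ⟨(2:ℂ)⁻¹ • (x + J x), hpmem x⟩ : Hm) : H) :=
      (hmemm _).mp (W ⟨_, hpmem x⟩).2
    have h2 : J ((W.symm ⟨(2:ℂ)⁻¹ • (x - J x), hmmem x⟩ : Hp) : H)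
        = ((W.symm ⟨(2:ℂ)⁻¹ • (x - J x), hmmem x⟩ : Hp) : H) :=
      (hmemp _).mp (W.symm ⟨_, hmmem x⟩).2
    have h3 : R (J x) = ((W ⟨(2:ℂ)⁻¹ • (x + J x), hpmem x⟩ : Hm) : H)
        - ((W.symm ⟨(2:ℂ)⁻¹ • (x - J x), hmmem x⟩ : Hp) : H) := by
      conv_lhs => rw [← hJsplit x]
      rw [map_sub, hRp _ (hpmem x), hRm _ (hmmem x)]
    rw [ContinuousLinearMap.mul_apply, ContinuousLinearMap.neg_apply,
      ContinuousLinearMap.mul_apply, hR x, map_add, h1, h2, h3]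
    abel
  · -- commutes with S
    intro x
    obtain ⟨hJd, hSJx⟩ := hSJ x
    have Scongr : ∀ (a b : S.domain), (a : H) = (b : H) → S a = S b := by
      intro a b h
      exact congrArg (fun t => S t) (Subtype.ext h)
    have hpdom : (2:ℂ)⁻¹ • ((x : H) + J x) ∈ S.domain :=
      S.domain.smul_mem _ (S.domain.add_mem x.2 hJd)
    have hmdom : (2:ℂ)⁻¹ • ((x : H) - J x) ∈ S.domain :=
      S.domain.smul_mem _ (S.domain.sub_mem x.2 hJd)
    have hSp : S ⟨(2:ℂ)⁻¹ • ((x : H) + J x), hpdom⟩ = (2:ℂ)⁻¹ • ((S x : H) + J (S x)) := by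
      have e : (⟨(2:ℂ)⁻¹ • ((x : H) + J x), hpdom⟩ : S.domain)
          = (2:ℂ)⁻¹ • (x + ⟨J x, hJd⟩) := rfl
      rw [e, S.map_smul, S.map_add, hSJx]
    have hSm : S ⟨(2:ℂ)⁻¹ • ((x : H) - J x), hmdom⟩ = (2:ℂ)⁻¹ • ((S x : H) - J (S x)) := by
      have e : (⟨(2:ℂ)⁻¹ • ((x : H) - J x), hmdom⟩ : S.domain)
          = (2:ℂ)⁻¹ • (x - ⟨J x, hJd⟩) := rfl
      rw [e, S.map_smul, S.map_sub, hSJx]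
    -- plus part
    obtain ⟨hd1, hm1, heq1⟩ := hWS _ (hpmem (x : H)) hpdom
    have hq1 : S ⟨((W ⟨(2:ℂ)⁻¹ • ((x : H) + J x), hpmem (x : H)⟩ : Hm) : H), hd1⟩
        = ((W ⟨(2:ℂ)⁻¹ • ((S x : H) + J (S x)), hpmem (S x : H)⟩ : Hm) : H) := by
      have e1 : (W.symm ⟨S ⟨_, hd1⟩, hm1⟩ : Hp)
          = ⟨(2:ℂ)⁻¹ • ((S x : H) + J (S x)), hpmem (S x : H)⟩ :=
        Subtype.ext (heq1.symm.trans hSp)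
      have e2 := congrArg W e1
      rw [W.apply_symm_apply] at e2
      exact congrArg Subtype.val e2
    -- minus part
    have hud : ((W.symm ⟨(2:ℂ)⁻¹ • ((x : H) - J x), hmmem (x : H)⟩ : Hp) : H) ∈ S.domain :=
      hWonto _ (hmmem (x : H)) hmdom
    obtain ⟨hd2, hm2, heq2⟩ :=
      hWS _ (W.symm ⟨(2:ℂ)⁻¹ • ((x : H) - J x), hmmem (x : H)⟩).2 hud
    have hc : ((W ⟨((W.symm ⟨(2:ℂ)⁻¹ • ((x : H) - J x), hmmem (x : H)⟩ : Hp) : H),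
        (W.symm ⟨(2:ℂ)⁻¹ • ((x : H) - J x), hmmem (x : H)⟩).2⟩ : Hm) : H)
        = (2:ℂ)⁻¹ • ((x : H) - J x) := by
      show ((W (W.symm ⟨(2:ℂ)⁻¹ • ((x : H) - J x), hmmem (x : H)⟩) : Hm) : H) = _
      rw [W.apply_symm_apply]
    have hq2 : S ⟨((W.symm ⟨(2:ℂ)⁻¹ • ((x : H) - J x), hmmem (x : H)⟩ : Hp) : H), hud⟩
        = ((W.symm ⟨(2:ℂ)⁻¹ • ((S x : H) - J (S x)), hmmem (S x : H)⟩ : Hp) : H) := by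
      have e : (⟨S ⟨_, hd2⟩, hm2⟩ : Hm)
          = ⟨(2:ℂ)⁻¹ • ((S x : H) - J (S x)), hmmem (S x : H)⟩ :=
        Subtype.ext ((Scongr ⟨_, hd2⟩ ⟨(2:ℂ)⁻¹ • ((x : H) - J x), hmdom⟩ hc).trans hSm)
      exact heq2.trans (congrArg Subtype.val (congrArg W.symm e))
    have hRdom : R (x : H) ∈ S.domain := by
      rw [hR (x : H)]
      exact S.domain.add_mem hd1 hud
    refine ⟨hRdom, ?_⟩
    have hsum : S ⟨R (x : H), hRdom⟩
        = S ((⟨_, hd1⟩ : S.domain) + ⟨_, hud⟩) := Scongr _ _ (hR (x : H))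
    rw [hsum, S.map_add, hq1, hq2, hR (S x : H)]
end
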